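/- Let M be an n×n Manin matrix over an associative unital (possibly noncommutative) ring R. Then the row permanent of M does not depend on the order of the rows used in its expansion: for every permutation p ∈ S_n one has perm^row(M) = Σ_{σ∈S_n} M_{p(1),σ(p(1))} M_{p(2),σ(p(2))} ⋯ M_{p(n),σ(p(n))}, where the factors are multiplied in the indicated order. -/

import Mathlib

open scoped BigOperators

/-- A matrix `M` over a (possibly noncommutative) ring is a *Manin matrix* if
entries of the same column commute and cross-commutators of 2×2 submatrices are equal. -/
def Matrix.IsManin {R : Type*} [Ring R] {n m : ℕ} (M : Matrix (Fin n) (Fin m) R) : Prop :=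
  (∀ i k : Fin n, ∀ j : Fin m, M i j * M k j = M k j * M i j) ∧
  (∀ i k : Fin n, ∀ j l : Fin m,
    M i j * M k l - M k l * M i j = M k j * M i l - M i l * M k j)

/-- Column determinant: factors multiplied in order of increasing column index. -/
noncomputable def Matrix.detCol {R : Type*} [Ring R] {n : ℕ}
    (M : Matrix (Fin n) (Fin n) R) : R :=
  ∑ σ : Equiv.Perm (Fin n),
    (Equiv.Perm.sign σ : ℤ) • ((List.finRange n).map (fun i => M (σ i) i)).prod

/-- Row determinant: factors multiplied in order of increasing row index. -/
noncomputable def Matrix.detRow {R : Type*} [Ring R] {n : ℕ}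
    (M : Matrix (Fin n) (Fin n) R) : R :=
  ∑ σ : Equiv.Perm (Fin n),
    (Equiv.Perm.sign σ : ℤ) • ((List.finRange n).map (fun i => M i (σ i))).prod

/-- Row permanent: factors multiplied in order of increasing row index. -/
noncomputable def Matrix.permRow {R : Type*} [Ring R] {n : ℕ}
    (M : Matrix (Fin n) (Fin n) R) : R :=
  ∑ σ : Equiv.Perm (Fin n), ((List.finRange n).map (fun i => M i (σ i))).prod

namespace ManinAux

variable {R : Type*} [Ring R]

/-- The row-permanent expansion with rows taken in the order `p 0, p 1, …`. -/
noncomputable def G {n : ℕ} (M : Matrix (Fin n) (Fin n) R) (p : Equiv.Perm (Fin n)) : R :=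
  ∑ σ : Equiv.Perm (Fin n), ((List.finRange n).map (fun i => M (p i) (σ (p i)))).prod

lemma take_lt {n : ℕ} (k : ℕ) {i : Fin n} (hi : i ∈ (List.finRange n).take k) :
    (i : ℕ) < k := by
  rw [List.mem_iff_getElem] at hi
  obtain ⟨m, hm, rfl⟩ := hi
  simp only [List.getElem_take, List.getElem_finRange, Fin.coe_cast]
  simp [List.length_take] at hm
  exact hm.1

lemma drop_ge {n : ℕ} (k : ℕ) {i : Fin n} (hi : i ∈ (List.finRange n).drop k) :
    k ≤ (i : ℕ) := by
  rw [List.mem_iff_getElem] at hi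
  obtain ⟨m, hm, rfl⟩ := hi
  simp only [List.getElem_drop, List.getElem_finRange, Fin.coe_cast]
  omega

lemma G_mul_swap {m : ℕ} (M : Matrix (Fin (m+1)) (Fin (m+1)) R)
    (hMcomm : ∀ i k : Fin (m+1), ∀ j l : Fin (m+1),
      M i j * M k l - M k l * M i j = M k j * M i l - M i l * M k j)
    (q : Equiv.Perm (Fin (m+1))) (k : Fin m) :
    G M (q * Equiv.swap k.castSucc k.succ) = G M q := by
  set a : Fin (m+1) := k.castSucc with ha
  set b : Fin (m+1) := k.succ with hb
  have hav : (a : ℕ) = k := by rw [ha, Fin.coe_castSucc]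
  have hbv : (b : ℕ) = (k : ℕ) + 1 := by rw [hb, Fin.val_succ]
  have hab : a ≠ b := Fin.ne_of_val_ne (by omega)
  set r : Fin (m+1) := q a with hr
  set r' : Fin (m+1) := q b with hr'
  have hrr' : r ≠ r' := fun h => hab (q.injective h)
  set L : List (Fin (m+1)) := List.finRange (m+1) with hL
  have hdec : L = L.take k ++ a :: b :: L.drop ((k : ℕ) + 2) := by
    conv_lhs => rw [← List.take_append_drop (k : ℕ) L]
    rw [List.drop_eq_getElem_cons (l := L) (i := (k : ℕ))
          (by simp only [hL, List.length_finRange]; omega),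
        List.drop_eq_getElem_cons (l := L) (i := (k : ℕ) + 1)
          (by simp only [hL, List.length_finRange]; omega)]
    congr 2
    · simp only [hL, List.getElem_finRange]
      exact Fin.ext (by simp [hav])
    · congr 1
      simp only [hL, List.getElem_finRange]
      exact Fin.ext (by simp [hbv])
  have hne_take : ∀ σi : Fin (m+1), (σi : ℕ) < k → σi ≠ a ∧ σi ≠ b :=
    fun σi h => ⟨Fin.ne_of_val_ne (by omega), Fin.ne_of_val_ne (by omega)⟩
  have hne_drop : ∀ σi : Fin (m+1), (k : ℕ) + 2 ≤ (σi : ℕ) → σi ≠ a ∧ σi ≠ b :=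
    fun σi h => ⟨Fin.ne_of_val_ne (by omega), Fin.ne_of_val_ne (by omega)⟩
  -- structured forms of the summands
  have hterm : ∀ σ : Equiv.Perm (Fin (m+1)),
      (L.map fun i => M (q i) (σ (q i))).prod
        = ((L.take k).map fun i => M (q i) (σ (q i))).prod *
          (M r (σ r) * (M r' (σ r') *
            ((L.drop ((k:ℕ)+2)).map fun i => M (q i) (σ (q i))).prod)) := by
    intro σ
    conv_lhs => rw [hdec]
    simp [List.prod_append, mul_assoc, hr, hr']
  have hterm2 : ∀ σ : Equiv.Perm (Fin (m+1)),
      (L.map fun i => M (q (Equiv.swap a b i)) (σ (q (Equiv.swap a b i)))).prod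
        = ((L.take k).map fun i => M (q i) (σ (q i))).prod *
          (M r' (σ r') * (M r (σ r) *
            ((L.drop ((k:ℕ)+2)).map fun i => M (q i) (σ (q i))).prod)) := by
    intro σ
    conv_lhs => rw [hdec]
    rw [List.map_append, List.map_cons, List.map_cons]
    rw [List.map_congr_left (fun i hi => by
      obtain ⟨h1, h2⟩ := hne_take i (take_lt k hi)
      rw [Equiv.swap_apply_of_ne_of_ne h1 h2])]
    rw [List.map_congr_left (l := L.drop ((k:ℕ)+2)) (fun i hi => by
      obtain ⟨h1, h2⟩ := hne_drop i (drop_ge ((k:ℕ)+2) hi)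
      rw [Equiv.swap_apply_of_ne_of_ne h1 h2])]
    rw [Equiv.swap_apply_left, Equiv.swap_apply_right]
    simp [List.prod_append, mul_assoc, hr, hr']
  have hPinv : ∀ σ : Equiv.Perm (Fin (m+1)),
      ((L.take k).map fun i => M (q i) (σ (Equiv.swap r r' (q i)))).prod
        = ((L.take k).map fun i => M (q i) (σ (q i))).prod := by
    intro σ
    refine congrArg List.prod (List.map_congr_left fun i hi => ?_)
    have hiv := take_lt (n := m+1) k hi
    have h1 : q i ≠ r := fun h => (hne_take i hiv).1 (q.injective h)
    have h2 : q i ≠ r' := fun h => (hne_take i hiv).2 (q.injective h)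
    rw [Equiv.swap_apply_of_ne_of_ne h1 h2]
  have hQinv : ∀ σ : Equiv.Perm (Fin (m+1)),
      ((L.drop ((k:ℕ)+2)).map fun i => M (q i) (σ (Equiv.swap r r' (q i)))).prod
        = ((L.drop ((k:ℕ)+2)).map fun i => M (q i) (σ (q i))).prod := by
    intro σ
    refine congrArg List.prod (List.map_congr_left fun i hi => ?_)
    have hiv := drop_ge (n := m+1) ((k:ℕ)+2) hi
    have h1 : q i ≠ r := fun h => (hne_drop i hiv).1 (q.injective h)
    have h2 : q i ≠ r' := fun h => (hne_drop i hiv).2 (q.injective h)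
    rw [Equiv.swap_apply_of_ne_of_ne h1 h2]
  unfold G
  simp only [Equiv.Perm.mul_apply]
  rw [Finset.sum_congr rfl fun σ _ => hterm2 σ, Finset.sum_congr rfl fun σ _ => hterm σ]
  rw [← sub_eq_zero, ← Finset.sum_sub_distrib]
  refine Finset.sum_ninvolution (fun σ => σ * Equiv.swap r r') ?_ ?_
    (fun _ => Finset.mem_univ _) ?_
  · intro σ
    simp only [Equiv.Perm.mul_apply, Equiv.swap_apply_left, Equiv.swap_apply_right]
    rw [hPinv σ, hQinv σ]
    have key := hMcomm r r' (σ r) (σ r')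
    set Pp := ((L.take k).map fun i => M (q i) (σ (q i))).prod with hPp
    set Qp := ((L.drop ((k:ℕ)+2)).map fun i => M (q i) (σ (q i))).prod with hQp
    set x := M r (σ r)
    set y := M r' (σ r')
    set u := M r' (σ r)
    set v := M r (σ r')
    have e : Pp * (y * (x * Qp)) - Pp * (x * (y * Qp)) +
          (Pp * (u * (v * Qp)) - Pp * (v * (u * Qp)))
        = Pp * (((y * x - x * y) + (u * v - v * u)) * Qp) := by noncomm_ring
    rw [e, ← key]
    noncomm_ring
  · intro σ h
    intro hc
    have hc' : σ * Equiv.swap r r' = σ := hc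
    have h2 : (σ * Equiv.swap r r') r = σ r := by rw [hc']
    simp only [Equiv.Perm.mul_apply, Equiv.swap_apply_left] at h2
    exact hrr' (σ.injective h2).symm
  · intro σ
    show σ * Equiv.swap r r' * Equiv.swap r r' = σ
    rw [mul_assoc, Equiv.swap_mul_self, mul_one]

lemma G_eq_G_one {m : ℕ} (M : Matrix (Fin (m+1)) (Fin (m+1)) R)
    (hMcomm : ∀ i k : Fin (m+1), ∀ j l : Fin (m+1),
      M i j * M k l - M k l * M i j = M k j * M i l - M i l * M k j)
    (p : Equiv.Perm (Fin (m+1))) : G M p = G M 1 := by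
  have hp : p ∈ Submonoid.closure
      (Set.range fun i : Fin m => Equiv.swap i.castSucc i.succ) := by
    rw [Equiv.Perm.mclosure_swap_castSucc_succ]; trivial
  obtain ⟨l, hl, rfl⟩ := Submonoid.exists_list_of_mem_closure hp
  clear hp
  induction l using List.reverseRecOn with
  | nil => simp
  | append_singleton l' s ih =>
    obtain ⟨k, rfl⟩ := hl s (by simp)
    rw [List.prod_append, List.prod_singleton, G_mul_swap M hMcomm]
    exact ih fun y hy => hl y (by simp [hy])

end ManinAux

/-- the row permanent of a Manin matrix does not depend on the order
of the rows used in its expansion. -/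

theorem permRow_row_order_independent {R : Type*} [Ring R] {n : ℕ}
    (M : Matrix (Fin n) (Fin n) R) (hM : M.IsManin) (p : Equiv.Perm (Fin n)) :
    M.permRow = ∑ σ : Equiv.Perm (Fin n),
      ((List.finRange n).map (fun i => M (p i) (σ (p i)))).prod := by
  have hRHS : (∑ σ : Equiv.Perm (Fin n),
      ((List.finRange n).map (fun i => M (p i) (σ (p i)))).prod) = ManinAux.G M p := rfl
  have hL : M.permRow = ManinAux.G M 1 := by
    unfold Matrix.permRow ManinAux.G
    simp
  rw [hRHS, hL]
  cases n with
  | zero =>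
    have : p = 1 := Equiv.ext fun i => i.elim0
    rw [this]
  | succ m =>
    exact (ManinAux.G_eq_G_one M hM.2 p).symm
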